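/- Let G = (V, E₀) be a finite connected simple graph, and let T ⊆ V with 2 ≤ |T| < |V| be such that no edge of E₀ has both endpoints in T. Let ℰ_T be the collection of subsets X ⊆ E₀ such that the graph (V, X) is acyclic and no connected component of (V, X) contains more than one vertex of T. Then ℰ_T is the family of independent sets of a matroid on E₀; in particular, ∅ ∈ ℰ_T, ℰ_T is downward closed, and whenever X, Y ∈ ℰ_T with |X| < |Y| there exists e ∈ Y \ X with X ∪ {e} ∈ ℰ_T. -/

import Mathlib

/-- Membership in `ℰ_T`: `X ⊆ E₀`, the graph `(V, X)` is acyclic, and no connected component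
of `(V, X)` contains more than one vertex of `S`. -/
def MultiwayIndep {V : Type*} (G : SimpleGraph V) (S : Set V) (X : Set (Sym2 V)) : Prop :=
  X ⊆ G.edgeSet ∧ (SimpleGraph.fromEdgeSet X).IsAcyclic ∧
    ∀ u ∈ S, ∀ v ∈ S, u ≠ v → ¬ (SimpleGraph.fromEdgeSet X).Reachable u v

namespace MWAux

open SimpleGraph Set Submodule

open scoped Classical

variable {V : Type*}

/-- Representative of a vertex: vertices of `S` are collapsed to `s0`. -/
noncomputable def rep (S : Set V) (s0 : V) (c : V) : V := if c ∈ S then s0 else c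

/-- Characteristic vector of the (collapsed) vertex `c`. -/
noncomputable def chi (S : Set V) (s0 : V) (c : V) : V → ℚ :=
  fun x => if x = rep S s0 c then 1 else 0

/-- Vector associated to an edge. -/
noncomputable def phi (S : Set V) (s0 : V) (e : Sym2 V) : V → ℚ :=
  chi S s0 e.out.1 - chi S s0 e.out.2

/-- `w` is in an `S`-touching component of `fromEdgeSet X`. -/
def SBlock (S : Set V) (X : Set (Sym2 V)) (w : V) : Prop :=
  ∃ t ∈ S, (SimpleGraph.fromEdgeSet X).Reachable w t

lemma sym2_out (e : Sym2 V) : s(e.out.1, e.out.2) = e := by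
  exact Quot.out_eq e

lemma out_pair {u v : V} (e : Sym2 V) (h : e = s(u, v)) :
    (e.out.1 = u ∧ e.out.2 = v) ∨ (e.out.1 = v ∧ e.out.2 = u) := by
  rw [← sym2_out e] at h
  exact Sym2.eq_iff.mp h

variable {S : Set V} {s0 : V}

lemma rep_mem {c : V} (hc : c ∈ S) : rep S s0 c = s0 := if_pos hc

lemma rep_not_mem {c : V} (hc : c ∉ S) : rep S s0 c = c := if_neg hc

lemma rep_mem_iff (hs0 : s0 ∈ S) {c : V} : rep S s0 c ∈ S ↔ c ∈ S := by
  by_cases hc : c ∈ S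
  · simp [rep_mem hc, hc, hs0]
  · simp [rep_not_mem hc, hc]

lemma rep_eq_cases (hs0 : s0 ∈ S) {a b : V} (h : rep S s0 a = rep S s0 b) :
    a = b ∨ (a ∈ S ∧ b ∈ S) := by
  by_cases ha : a ∈ S <;> by_cases hb : b ∈ S
  · exact Or.inr ⟨ha, hb⟩
  · rw [rep_mem ha, rep_not_mem hb] at h; exact absurd (h ▸ hs0) hb
  · rw [rep_not_mem ha, rep_mem hb] at h; exact absurd (h.symm ▸ hs0) ha
  · rw [rep_not_mem ha, rep_not_mem hb] at h; exact Or.inl h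

lemma chi_eq_of_rep_eq {a b : V} (h : rep S s0 a = rep S s0 b) : chi S s0 a = chi S s0 b := by
  unfold chi; rw [h]

/-- One step of the telescoping argument. -/
lemma chi_sub_mem_span_of_mem (X : Set (Sym2 V)) {a c : V} (h : s(a, c) ∈ X) :
    chi S s0 a - chi S s0 c ∈ span ℚ (phi S s0 '' X) := by
  have hmem : phi S s0 s(a, c) ∈ span ℚ (phi S s0 '' X) :=
    subset_span (mem_image_of_mem _ h)
  rcases out_pair s(a, c) rfl with ⟨h1, h2⟩ | ⟨h1, h2⟩
  · have : phi S s0 s(a, c) = chi S s0 a - chi S s0 c := by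
      unfold phi; rw [h1, h2]
    rwa [this] at hmem
  · have : phi S s0 s(a, c) = chi S s0 c - chi S s0 a := by
      unfold phi; rw [h1, h2]
    rw [this] at hmem
    simpa [neg_sub] using neg_mem hmem

lemma chi_sub_mem_span_of_reachable (X : Set (Sym2 V)) {a b : V}
    (h : (fromEdgeSet X).Reachable a b) :
    chi S s0 a - chi S s0 b ∈ span ℚ (phi S s0 '' X) := by
  obtain ⟨p⟩ := h
  induction p with
  | nil => simp
  | @cons a c b h p ih =>
      have h1 : chi S s0 a - chi S s0 c ∈ span ℚ (phi S s0 '' X) :=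
        chi_sub_mem_span_of_mem X ((fromEdgeSet_adj _).mp h).1
      have := add_mem h1 ih
      simpa using this

/-- The key "functional" lemma: if `u` and `v` are not connected and `v`'s component does not
touch `S`, then `χ u - χ v` is not in the span of the edge vectors. -/
lemma chi_sub_not_mem_span (hs0 : s0 ∈ S) (X : Set (Sym2 V)) {u v : V}
    [Fintype V]
    (hnr : ¬ (fromEdgeSet X).Reachable u v) (hnb : ¬ SBlock S X v) :
    chi S s0 u - chi S s0 v ∉ span ℚ (phi S s0 '' X) := by
  set R : V → Prop := fun x => (fromEdgeSet X).Reachable x v with hR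
  set F : (V → ℚ) → ℚ := fun w => ∑ x : V, if R x then w x else 0 with hF
  have hTS : ∀ x, R x → x ∉ S := fun x hx hxS => hnb ⟨x, hxS, hx.symm⟩
  have hrep : ∀ c, R (rep S s0 c) ↔ R c := by
    intro c
    by_cases hc : c ∈ S
    · rw [rep_mem hc]
      constructor
      · intro h; exact absurd hs0 (hTS _ h)
      · intro h; exact absurd hc (hTS _ h)
    · rw [rep_not_mem hc]
  have Fchi : ∀ c, F (chi S s0 c) = if R c then 1 else 0 := by
    intro c
    have : ∀ x : V, (if R x then chi S s0 c x else 0)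
        = if x = rep S s0 c then (if R (rep S s0 c) then 1 else 0) else 0 := by
      intro x
      by_cases hx : x = rep S s0 c
      · subst hx; simp [chi]
      · simp [chi, hx]
    rw [hF]
    simp only [this]
    rw [Finset.sum_ite_eq' Finset.univ (rep S s0 c) (fun _ => if R (rep S s0 c) then (1:ℚ) else 0)]
    simp [hrep c]
  have Fsub : ∀ w1 w2 : V → ℚ, F (w1 - w2) = F w1 - F w2 := by
    intro w1 w2
    rw [hF]
    simp only
    rw [← Finset.sum_sub_distrib]
    refine Finset.sum_congr rfl fun x _ => ?_
    by_cases hx : R x <;> simp [hx]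
  have Fspan : ∀ w ∈ span ℚ (phi S s0 '' X), F w = 0 := by
    intro w hw
    induction hw using Submodule.span_induction with
    | mem w hwmem =>
        obtain ⟨f, hf, rfl⟩ := hwmem
        have : phi S s0 f = chi S s0 f.out.1 - chi S s0 f.out.2 := rfl
        rw [this, Fsub, Fchi, Fchi]
        have hiff : R f.out.1 ↔ R f.out.2 := by
          by_cases hd : f.out.1 = f.out.2
          · rw [hd]
          · have hadj : (fromEdgeSet X).Adj f.out.1 f.out.2 :=
              (fromEdgeSet_adj _).mpr ⟨by rw [sym2_out]; exact hf, hd⟩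
            exact ⟨fun h => hadj.symm.reachable.trans h, fun h => hadj.reachable.trans h⟩
        by_cases h1 : R f.out.1
        · simp [h1, hiff.mp h1]
        · have h2 : ¬ R f.out.2 := fun h => h1 (hiff.mpr h)
          simp [h1, h2]
    | zero => simp [hF]
    | add x y _ _ hx hy =>
        have : F (x + y) = F x + F y := by
          rw [hF]; simp only
          rw [← Finset.sum_add_distrib]
          refine Finset.sum_congr rfl fun z _ => ?_
          by_cases hz : R z <;> simp [hz]
        rw [this, hx, hy, add_zero]
    | smul r x _ hx =>
        have : F (r • x) = r * F x := by
          rw [hF]; simp only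
          rw [Finset.mul_sum]
          refine Finset.sum_congr rfl fun z _ => ?_
          by_cases hz : R z <;> simp [hz]
        rw [this, hx, mul_zero]
  intro hmem
  have h0 : F (chi S s0 u - chi S s0 v) = 0 := Fspan _ hmem
  rw [Fsub, Fchi, Fchi] at h0
  have hRu : ¬ R u := hnr
  have hRv : R v := Reachable.refl v
  rw [if_neg hRu, if_pos hRv] at h0
  norm_num at h0


/-! ### Graph lemmas -/

lemma downward {G : SimpleGraph V} {X Y : Set (Sym2 V)} (hX : MultiwayIndep G S X)
    (hYX : Y ⊆ X) : MultiwayIndep G S Y := by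
  have hle : fromEdgeSet Y ≤ fromEdgeSet X := fromEdgeSet_mono hYX
  refine ⟨hYX.trans hX.1, ?_, ?_⟩
  · intro a p hp
    exact hX.2.1 (p.mapLe hle) (hp.mapLe hle)
  · intro a ha b hb hab hr
    exact hX.2.2 a ha b hb hab (hr.mono hle)

lemma le_sdiff (X : Set (Sym2 V)) (f : Sym2 V) :
    fromEdgeSet (X \ {f}) ≤ fromEdgeSet X \ fromEdgeSet {f} := by
  intro x y h
  rw [fromEdgeSet_adj] at h
  rw [sdiff_adj, fromEdgeSet_adj, fromEdgeSet_adj]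
  exact ⟨⟨h.1.1, h.2⟩, fun hc => h.1.2 hc.1⟩

lemma insert_sdiff_le (e : Sym2 V) (X : Set (Sym2 V)) (f : Sym2 V) :
    fromEdgeSet (insert e X) \ fromEdgeSet {f} ≤ fromEdgeSet (insert e (X \ {f})) := by
  intro x y h
  rw [sdiff_adj, fromEdgeSet_adj, fromEdgeSet_adj] at h
  rw [fromEdgeSet_adj]
  refine ⟨?_, h.1.2⟩
  rcases h.1.1 with h1 | h1
  · exact Or.inl h1
  · exact Or.inr ⟨h1, fun hc => h.2 ⟨hc, h.1.2⟩⟩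

lemma insert_sdiff_le' (e : Sym2 V) (X : Set (Sym2 V)) :
    fromEdgeSet (insert e X) \ fromEdgeSet {e} ≤ fromEdgeSet X := by
  intro x y h
  rw [sdiff_adj, fromEdgeSet_adj, fromEdgeSet_adj] at h
  rw [fromEdgeSet_adj]
  refine ⟨?_, h.1.2⟩
  rcases h.1.1 with h1 | h1
  · exact absurd ⟨h1, h.1.2⟩ h.2
  · exact h1

lemma not_reachable_sdiff_of_acyclic {X : Set (Sym2 V)}
    (hac : (fromEdgeSet X).IsAcyclic) {a b : V} (hab : s(a, b) ∈ X) (hne : a ≠ b) :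
    ¬ (fromEdgeSet (X \ {s(a, b)})).Reachable a b := by
  have hadj : (fromEdgeSet X).Adj a b := (fromEdgeSet_adj _).mpr ⟨hab, hne⟩
  have hb := (isAcyclic_iff_forall_adj_isBridge.mp hac) hadj
  rw [isBridge_iff] at hb
  exact fun hr => hb (hr.mono (le_sdiff X s(a, b)))

/-- Walk surgery: a walk in the graph with an extra edge `s(u,v)` yields reachability
information in the original graph. -/
lemma surgery {X : Set (Sym2 V)} {u v a b : V}
    (p : (fromEdgeSet (insert s(u, v) X)).Walk a b) :
    (fromEdgeSet X).Reachable a b ∨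
      ((fromEdgeSet X).Reachable a u ∧ (fromEdgeSet X).Reachable v b) ∨
      ((fromEdgeSet X).Reachable a v ∧ (fromEdgeSet X).Reachable u b) := by
  induction p with
  | nil => exact Or.inl (Reachable.refl _)
  | @cons a c b h p ih =>
      rw [fromEdgeSet_adj] at h
      obtain ⟨hm, hne⟩ := h
      rcases hm with hm | hm
      · -- s(a,c) = s(u,v)
        rcases Sym2.eq_iff.mp hm with ⟨rfl, rfl⟩ | ⟨rfl, rfl⟩
        · rcases ih with h1 | ⟨h1, h2⟩ | ⟨h1, h2⟩
          · exact Or.inr (Or.inl ⟨Reachable.refl _, h1⟩)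
          · exact Or.inr (Or.inl ⟨Reachable.refl _, h2⟩)
          · exact Or.inl h2
        · rcases ih with h1 | ⟨h1, h2⟩ | ⟨h1, h2⟩
          · exact Or.inr (Or.inr ⟨Reachable.refl _, h1⟩)
          · exact Or.inl h2
          · exact Or.inr (Or.inr ⟨Reachable.refl _, h2⟩)
      · have hadj : (fromEdgeSet X).Adj a c := (fromEdgeSet_adj _).mpr ⟨hm, hne⟩
        rcases ih with h1 | ⟨h1, h2⟩ | ⟨h1, h2⟩
        · exact Or.inl (hadj.reachable.trans h1)
        · exact Or.inr (Or.inl ⟨hadj.reachable.trans h1, h2⟩)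
        · exact Or.inr (Or.inr ⟨hadj.reachable.trans h1, h2⟩)

/-- Inserting an edge whose endpoints lie in different blocks preserves independence. -/
lemma insert_indep {G : SimpleGraph V} {X : Set (Sym2 V)} {u v : V}
    (hX : MultiwayIndep G S X) (huv : s(u, v) ∈ G.edgeSet)
    (hnr : ¬ (fromEdgeSet X).Reachable u v)
    (hnb : ¬ (SBlock S X u ∧ SBlock S X v)) :
    MultiwayIndep G S (insert s(u, v) X) := by
  have hne : u ≠ v := ((SimpleGraph.mem_edgeSet G).mp huv).ne
  refine ⟨Set.insert_subset huv hX.1, ?_, ?_⟩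
  · -- acyclic
    rw [isAcyclic_iff_forall_adj_isBridge]
    intro a b hab
    have hab' := hab
    rw [fromEdgeSet_adj] at hab'
    obtain ⟨hm, hneab⟩ := hab'
    rw [isBridge_iff]
    refine fun hr => ?_
    by_cases hcase : s(a, b) = s(u, v)
    · rw [hcase] at hr
      have hr2 : (fromEdgeSet X).Reachable a b :=
        (hr.mono (insert_sdiff_le' s(u, v) X))
      rcases Sym2.eq_iff.mp hcase with ⟨rfl, rfl⟩ | ⟨rfl, rfl⟩
      · exact hnr hr2
      · exact hnr hr2.symm
    · have hmX : s(a, b) ∈ X := by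
        rcases hm with hm | hm
        · exact absurd hm hcase
        · exact hm
      have hr2 := hr.mono (insert_sdiff_le s(u, v) X s(a, b))
      obtain ⟨p⟩ := hr2
      have hadjX : (fromEdgeSet X).Adj a b := (fromEdgeSet_adj _).mpr ⟨hmX, hneab⟩
      rcases surgery p with h1 | ⟨h1, h2⟩ | ⟨h1, h2⟩
      · exact not_reachable_sdiff_of_acyclic hX.2.1 hmX hneab h1
      · -- Reach a u, Reach v b in X \ {s(a,b)}
        have hmono := fromEdgeSet_mono (Set.diff_subset (s := X) (t := {s(a, b)}))
        exact hnr ((h1.mono hmono).symm.trans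
          (hadjX.reachable.trans (h2.mono hmono).symm))
      · have hmono := fromEdgeSet_mono (Set.diff_subset (s := X) (t := {s(a, b)}))
        exact hnr ((h2.mono hmono).trans
          (hadjX.symm.reachable.trans (h1.mono hmono)))
  · -- separation
    intro s1 hs1 s2 hs2 hne12 hr
    obtain ⟨p⟩ := hr
    rcases surgery p with h1 | ⟨h1, h2⟩ | ⟨h1, h2⟩
    · exact hX.2.2 s1 hs1 s2 hs2 hne12 h1
    · exact hnb ⟨⟨s1, hs1, h1.symm⟩, ⟨s2, hs2, h2⟩⟩
    · exact hnb ⟨⟨s2, hs2, h2⟩, ⟨s1, hs1, h1.symm⟩⟩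


/-- Not both endpoints of an edge of an independent set touch `S`, and they are not
reachable from each other, after removing the edge. -/
lemma good_of_mem {G : SimpleGraph V} {X : Set (Sym2 V)} (hX : MultiwayIndep G S X)
    {e : Sym2 V} (he : e ∈ X) :
    ¬ (fromEdgeSet (X \ {e})).Reachable e.out.1 e.out.2 ∧
    ¬ (SBlock S (X \ {e}) e.out.1 ∧ SBlock S (X \ {e}) e.out.2) := by
  set u := e.out.1
  set v := e.out.2
  have heq : s(u, v) = e := sym2_out e
  have hadjG : G.Adj u v := (SimpleGraph.mem_edgeSet G).mp (heq ▸ hX.1 he)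
  have hne : u ≠ v := hadjG.ne
  have hnr : ¬ (fromEdgeSet (X \ {e})).Reachable u v := by
    rw [← heq]
    exact not_reachable_sdiff_of_acyclic hX.2.1 (heq ▸ he) hne
  refine ⟨hnr, ?_⟩
  rintro ⟨⟨t1, ht1, hr1⟩, ⟨t2, ht2, hr2⟩⟩
  have hmono := fromEdgeSet_mono (Set.diff_subset (s := X) (t := {e}))
  have hadjX : (fromEdgeSet X).Adj u v := (fromEdgeSet_adj _).mpr ⟨heq ▸ he, hne⟩
  by_cases h12 : t1 = t2
  · subst h12
    exact hnr (hr1.trans hr2.symm)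
  · exact hX.2.2 t1 ht1 t2 ht2 h12
      ((hr1.mono hmono).symm.trans (hadjX.reachable.trans (hr2.mono hmono)))

lemma phi_not_mem_span_of_good [Fintype V] (hs0 : s0 ∈ S) {X : Set (Sym2 V)} {e : Sym2 V}
    (hnr : ¬ (fromEdgeSet X).Reachable e.out.1 e.out.2)
    (hnb : ¬ (SBlock S X e.out.1 ∧ SBlock S X e.out.2)) :
    phi S s0 e ∉ span ℚ (phi S s0 '' X) := by
  have hphi : phi S s0 e = chi S s0 e.out.1 - chi S s0 e.out.2 := rfl
  by_cases hv : SBlock S X e.out.2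
  · have hu : ¬ SBlock S X e.out.1 := fun h => hnb ⟨h, hv⟩
    have hkey := chi_sub_not_mem_span hs0 X (fun h => hnr h.symm) hu
    intro hmem
    rw [hphi] at hmem
    exact hkey (by simpa [neg_sub] using neg_mem hmem)
  · have hkey := chi_sub_not_mem_span hs0 X hnr hv
    rw [hphi]
    exact hkey

/-- Linear independence of the edge vectors of an independent set. -/
lemma li_of_indep [Fintype V] {G : SimpleGraph V} (hs0 : s0 ∈ S)
    {X : Set (Sym2 V)} (hX : MultiwayIndep G S X) :
    LinearIndependent ℚ (fun x : ↥(phi S s0 '' X) => (x : V → ℚ)) := by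
  have hfin : X.Finite := Set.toFinite X
  have main : ∀ n (X : Set (Sym2 V)), X.ncard = n → MultiwayIndep G S X →
      LinearIndependent ℚ (fun x : ↥(phi S s0 '' X) => (x : V → ℚ)) := by
    intro n
    induction n using Nat.strong_induction_on with
    | _ n ih =>
      intro X hn hX
      rcases X.eq_empty_or_nonempty with rfl | ⟨e, he⟩
      · rw [Set.image_empty]
        exact linearIndependent_empty _ _
      · have hXfin : X.Finite := Set.toFinite X
        set X' := X \ {e} with hX'def
        have hX' : MultiwayIndep G S X' := downward hX Set.diff_subset
        have hlt : X'.ncard < n := hn ▸ Set.ncard_diff_singleton_lt_of_mem he hXfin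
        have hli' := ih _ hlt X' rfl hX'
        obtain ⟨hnr, hnb⟩ := good_of_mem hX he
        have hnot : phi S s0 e ∉ span ℚ (phi S s0 '' X') :=
          phi_not_mem_span_of_good hs0 hnr hnb
        have himg : phi S s0 '' X = insert (phi S s0 e) (phi S s0 '' X') := by
          rw [hX'def, ← Set.image_insert_eq, Set.insert_diff_singleton,
            Set.insert_eq_self.mpr he]
        rw [himg]
        exact LinearIndepOn.id_insert hli' hnot
  exact main _ X rfl hX

/-- Injectivity of `phi` on an independent set. -/
lemma injOn_phi [Fintype V] {G : SimpleGraph V} (hs0 : s0 ∈ S)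
    (hno : ∀ u v : V, G.Adj u v → u ∈ S → v ∉ S)
    {X : Set (Sym2 V)} (hX : MultiwayIndep G S X) :
    Set.InjOn (phi S s0) X := by
  intro e he f hf heq
  set u := e.out.1 with hu
  set v := e.out.2 with hv
  set a := f.out.1 with ha
  set b := f.out.2 with hb
  have heuv : s(u, v) = e := sym2_out e
  have hfab : s(a, b) = f := sym2_out f
  have hadjGuv : G.Adj u v := (SimpleGraph.mem_edgeSet G).mp (heuv ▸ hX.1 he)
  have hadjGab : G.Adj a b := (SimpleGraph.mem_edgeSet G).mp (hfab ▸ hX.1 hf)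
  have hrep_ne : ∀ x y : V, G.Adj x y → rep S s0 x ≠ rep S s0 y := by
    intro x y hxy hrep
    rcases rep_eq_cases hs0 hrep with rfl | ⟨hxS, hyS⟩
    · exact hxy.ne rfl
    · exact hno x y hxy hxS hyS
  have hruv : rep S s0 u ≠ rep S s0 v := hrep_ne u v hadjGuv
  have hrab : rep S s0 a ≠ rep S s0 b := hrep_ne a b hadjGab
  have heq' : chi S s0 u - chi S s0 v = chi S s0 a - chi S s0 b := heq
  -- evaluate at rep u
  have hra : rep S s0 a = rep S s0 u := by
    have h1 := congrFun heq' (rep S s0 u)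
    simp only [Pi.sub_apply, chi] at h1
    rw [if_pos trivial, if_neg (fun h => hruv h)] at h1
    by_cases h2 : rep S s0 u = rep S s0 a
    · exact h2.symm
    · rw [if_neg h2] at h1
      by_cases h3 : rep S s0 u = rep S s0 b
      · rw [if_pos h3] at h1; norm_num at h1
      · rw [if_neg h3] at h1; norm_num at h1
  have hrb : rep S s0 b = rep S s0 v := by
    have h1 := congrFun heq' (rep S s0 v)
    simp only [Pi.sub_apply, chi] at h1
    rw [if_pos trivial, if_neg (fun h => hruv h.symm)] at h1
    rw [if_neg (fun h : rep S s0 v = rep S s0 a => hruv (hra ▸ h).symm)] at h1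
    by_cases h3 : rep S s0 v = rep S s0 b
    · exact h3.symm
    · rw [if_neg h3] at h1; norm_num at h1
  have hadjXuv : (fromEdgeSet X).Adj u v := (fromEdgeSet_adj _).mpr ⟨heuv ▸ he, hadjGuv.ne⟩
  have hadjXab : (fromEdgeSet X).Adj a b := (fromEdgeSet_adj _).mpr ⟨hfab ▸ hf, hadjGab.ne⟩
  rcases rep_eq_cases hs0 hra with hau | ⟨haS, huS⟩
  · rcases rep_eq_cases hs0 hrb with hbv | ⟨hbS, hvS⟩
    · rw [← heuv, ← hfab, hau, hbv]
    · -- a = u, b ∈ S, v ∈ S : v and b are S-vertices in the same component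
      have hreach : (fromEdgeSet X).Reachable v b :=
        hadjXuv.symm.reachable.trans (hau ▸ hadjXab).reachable
      by_cases hvb : v = b
      · rw [← heuv, ← hfab, hau, hvb]
      · exact absurd hreach (hX.2.2 v hvS b hbS hvb)
  · rcases rep_eq_cases hs0 hrb with hbv | ⟨hbS, hvS⟩
    · have hreach : (fromEdgeSet X).Reachable u a :=
        hadjXuv.reachable.trans (hbv ▸ hadjXab).symm.reachable
      by_cases hua : u = a
      · rw [← heuv, ← hfab, hua, hbv]
      · exact absurd hreach (hX.2.2 u huS a haS hua)
    · exact absurd hvS (hno u v hadjGuv huS)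

end MWAux

/-- `ℰ_T` is the family of independent sets of a matroid on `E₀`: it contains
`∅`, is downward closed, and satisfies the exchange (augmentation) axiom. -/
theorem stmt_14 {V : Type*} [Fintype V] (G : SimpleGraph V) (hG : G.Connected)
    (S : Set V) (hS : 2 ≤ S.ncard) (hS' : S.ncard < Nat.card V)
    (hno : ∀ u v : V, G.Adj u v → u ∈ S → v ∉ S) :
    MultiwayIndep G S ∅ ∧
    (∀ X : Set (Sym2 V), MultiwayIndep G S X → ∀ Y ⊆ X, MultiwayIndep G S Y) ∧
    (∀ X Y : Set (Sym2 V), MultiwayIndep G S X → MultiwayIndep G S Y →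
      X.ncard < Y.ncard → ∃ e ∈ Y \ X, MultiwayIndep G S (insert e X)) := by
  classical
  obtain ⟨s0, hs0⟩ : S.Nonempty := Set.nonempty_of_ncard_ne_zero (by omega)
  refine ⟨⟨Set.empty_subset _, ?_, ?_⟩, fun X hX Y hYX => MWAux.downward hX hYX, ?_⟩
  · rw [SimpleGraph.fromEdgeSet_empty]
    exact SimpleGraph.isAcyclic_bot
  · intro u _ v _ huv hr
    rw [SimpleGraph.fromEdgeSet_empty, SimpleGraph.reachable_bot] at hr
    exact huv hr
  · intro X Y hX hY hcard
    by_contra hcon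
    push_neg at hcon
    have hspan : MWAux.phi S s0 '' Y ⊆ ↑(Submodule.span ℚ (MWAux.phi S s0 '' X)) := by
      rintro w ⟨e, he, rfl⟩
      by_cases heX : e ∈ X
      · exact Submodule.subset_span (Set.mem_image_of_mem _ heX)
      · by_contra hnotmem
        have hphi : MWAux.phi S s0 e
            = MWAux.chi S s0 e.out.1 - MWAux.chi S s0 e.out.2 := rfl
        have hnr : ¬ (SimpleGraph.fromEdgeSet X).Reachable e.out.1 e.out.2 := by
          intro hr
          exact hnotmem (hphi ▸ MWAux.chi_sub_mem_span_of_reachable X hr)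
        have hnb : ¬ (MWAux.SBlock S X e.out.1 ∧ MWAux.SBlock S X e.out.2) := by
          rintro ⟨⟨t1, ht1, hr1⟩, ⟨t2, ht2, hr2⟩⟩
          apply hnotmem
          have hchit : MWAux.chi S s0 t1 = MWAux.chi S s0 t2 :=
            MWAux.chi_eq_of_rep_eq (by rw [MWAux.rep_mem ht1, MWAux.rep_mem ht2])
          have hsplit : MWAux.phi S s0 e
              = (MWAux.chi S s0 e.out.1 - MWAux.chi S s0 t1)
                - (MWAux.chi S s0 e.out.2 - MWAux.chi S s0 t2) := by
            rw [hphi, hchit]; ring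
          rw [hsplit]
          exact sub_mem (MWAux.chi_sub_mem_span_of_reachable X hr1)
            (MWAux.chi_sub_mem_span_of_reachable X hr2)
        have huvG : s(e.out.1, e.out.2) ∈ G.edgeSet := by
          rw [MWAux.sym2_out e]; exact hY.1 he
        have hins := MWAux.insert_indep hX huvG hnr hnb
        rw [MWAux.sym2_out e] at hins
        exact hcon e ⟨he, heX⟩ hins
    have hliX := MWAux.li_of_indep hs0 hX
    have hliY := MWAux.li_of_indep hs0 hY
    have hXf : (MWAux.phi S s0 '' X).Finite := (Set.toFinite X).image _
    have hYf : (MWAux.phi S s0 '' Y).Finite := (Set.toFinite Y).image _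
    haveI := hXf.fintype
    haveI := hYf.fintype
    have hg : LinearIndependent ℚ
        (fun x : ↥(MWAux.phi S s0 '' Y) =>
          (⟨(x : V → ℚ), hspan x.2⟩ : ↥(Submodule.span ℚ (MWAux.phi S s0 '' X)))) := by
      apply LinearIndependent.of_comp (Submodule.span ℚ (MWAux.phi S s0 '' X)).subtype
      exact hliY
    have h1 : Fintype.card ↥(MWAux.phi S s0 '' Y)
        ≤ Module.finrank ℚ (Submodule.span ℚ (MWAux.phi S s0 '' X)) :=
      hg.fintype_card_le_finrank
    have h2 : Module.finrank ℚ (Submodule.span ℚ (MWAux.phi S s0 '' X))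
        ≤ (MWAux.phi S s0 '' X).toFinset.card := finrank_span_le_card _
    have hYcard : (MWAux.phi S s0 '' Y).ncard = Fintype.card ↥(MWAux.phi S s0 '' Y) := by
      rw [Set.ncard_eq_toFinset_card', Set.toFinset_card]
    have hXcard : (MWAux.phi S s0 '' X).ncard = (MWAux.phi S s0 '' X).toFinset.card :=
      Set.ncard_eq_toFinset_card' _
    have hXinj : X.ncard = (MWAux.phi S s0 '' X).ncard :=
      (Set.ncard_image_of_injOn (MWAux.injOn_phi hs0 hno hX)).symm
    have hYinj : Y.ncard = (MWAux.phi S s0 '' Y).ncard :=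
      (Set.ncard_image_of_injOn (MWAux.injOn_phi hs0 hno hY)).symm
    omega
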